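/- Let ℓ ≥ 3 be odd and let A₁,…,A_{2ℓ} be a partition of [0,1] into measurable sets each of measure 1/(2ℓ). Define the kernel U by U(x,y) = +1 if x∈A_i, y∈A_j with ⌈i/ℓ⌉ = ⌈j/ℓ⌉ and i ≡ j±1 (mod ℓ); U(x,y) = −1 if x∈A_i, y∈A_j with ⌈i/ℓ⌉ ≠ ⌈j/ℓ⌉ and i ≡ j±1 (mod ℓ); and U(x,y)=0 otherwise. Then t(C_ℓ, U) = 2/ℓ^{ℓ−1}. -/

import Mathlib

open MeasureTheory

noncomputable section

/-- The Lebesgue measure restricted to `[0,1]`. -/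
abbrev muI : Measure ℝ := volume.restrict (Set.Icc 0 1)

/-- A graphon: a symmetric measurable function `[0,1]² → [0,1]`
(represented as a function on `ℝ²`). -/
def IsGraphon (W : ℝ → ℝ → ℝ) : Prop :=
  Measurable (Function.uncurry W) ∧ (∀ x y, W x y = W y x) ∧
    (∀ x y, W x y ∈ Set.Icc (0:ℝ) 1)

/-- The edges of a graph on `Fin m`, each listed once as an ordered pair. -/
def edgeFinset' {m : ℕ} (G : SimpleGraph (Fin m)) [DecidableRel G.Adj] :
    Finset (Fin m × Fin m) :=
  Finset.univ.filter fun p => p.1 < p.2 ∧ G.Adj p.1 p.2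

/-- The number of edges of `G`. -/
def edgeCount {m : ℕ} (G : SimpleGraph (Fin m)) [DecidableRel G.Adj] : ℕ :=
  (edgeFinset' G).card

/-- The homomorphism density `t(G, W)`. -/
def homDensity {m : ℕ} (G : SimpleGraph (Fin m)) [DecidableRel G.Adj]
    (W : ℝ → ℝ → ℝ) : ℝ :=
  ∫ x : Fin m → ℝ, ∏ p ∈ edgeFinset' G, W (x p.1) (x p.2)
    ∂(Measure.pi fun _ => muI)

/-- The single-edge graph `K₂`. -/
abbrev K2 : SimpleGraph (Fin 2) := ⊤

/-- The complete bipartite graph `K_{a,b}` on `Fin (a+b)`. -/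
def bip (a b : ℕ) : SimpleGraph (Fin (a + b)) where
  Adj i j := (decide (i.val < a)) ≠ (decide (j.val < a))
  symm := ⟨fun _ _ h => h.symm⟩
  loopless := ⟨fun _ h => h rfl⟩

instance (a b : ℕ) : DecidableRel (bip a b).Adj :=
  fun i j => inferInstanceAs (Decidable (_ ≠ _))

/-- The cycle `C_n` on `Fin n` (for `n ≥ 3`). -/
def cyc (n : ℕ) : SimpleGraph (Fin n) where
  Adj i j := i ≠ j ∧ ((i.val + 1) % n = j.val ∨ (j.val + 1) % n = i.val)
  symm := ⟨fun _ _ h => ⟨h.1.symm, h.2.symm⟩⟩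
  loopless := ⟨fun _ h => h.1 rfl⟩

instance (n : ℕ) : DecidableRel (cyc n).Adj :=
  fun i j => inferInstanceAs (Decidable (_ ∧ _))

section AuxLemmas
open Finset

def stepval (l : ℕ) (i j : Fin (2 * l)) : ℝ :=
  if (i.val % l + 1) % l = j.val % l ∨ (j.val % l + 1) % l = i.val % l then
    (if (i.val < l ↔ j.val < l) then (1:ℝ) else -1)
  else 0

lemma stepval_symm (l : ℕ) (i j : Fin (2 * l)) : stepval l i j = stepval l j i := by
  unfold stepval
  by_cases h : (i.val % l + 1) % l = j.val % l ∨ (j.val % l + 1) % l = i.val % l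
  · rw [if_pos h, if_pos (Or.symm h)]
    by_cases hs : i.val < l ↔ j.val < l
    · rw [if_pos hs, if_pos hs.symm]
    · rw [if_neg hs, if_neg (fun h' => hs h'.symm)]
  · rw [if_neg h, if_neg (fun h' => h (Or.symm h'))]


lemma lin_of_steps (l : ℕ) [NeZero l] (hl3 : 3 ≤ l) (r : Fin l → ZMod l) (e : ZMod l)
    (h : ∀ i, r (i + 1) = r i + e) : ∀ i : Fin l, r i = r 0 + (i.val : ZMod l) * e := by
  suffices H : ∀ n (hn : n < l), r ⟨n, hn⟩ = r 0 + (n : ZMod l) * e by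
    intro i; exact H i.val i.isLt
  intro n
  induction n with
  | zero =>
    intro hn
    have h0 : (⟨0, hn⟩ : Fin l) = 0 := by apply Fin.ext; simp
    rw [h0]; simp
  | succ n ih =>
    intro hn
    have hn' : n < l := Nat.lt_of_succ_lt hn
    have key : (⟨n + 1, hn⟩ : Fin l) = ⟨n, hn'⟩ + 1 := by
      apply Fin.ext
      simp [Fin.val_add, Fin.val_one', Nat.mod_eq_of_lt (by omega : 1 < l),
        Nat.mod_eq_of_lt hn]
    rw [key, h, ih hn']
    push_cast
    ring

lemma good_cases (l : ℕ) [NeZero l] (hl3 : 3 ≤ l) (hodd : Odd l) (r : Fin l → ZMod l)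
    (h : ∀ i, r (i + 1) = r i + 1 ∨ r (i + 1) = r i - 1) :
    (∀ i, r (i + 1) = r i + 1) ∨ (∀ i, r (i + 1) = r i - 1) := by
  set T : Finset (Fin l) := filter (fun i => r (i + 1) = r i + 1) univ with hT
  have htel : ∑ i : Fin l, (r (i + 1) - r i) = 0 := by
    rw [Finset.sum_sub_distrib]
    rw [Fintype.sum_equiv (Equiv.addRight (1 : Fin l)) (fun i => r (i + 1)) r (fun x => rfl)]
    ring
  have hsplit : ∑ i : Fin l, (r (i + 1) - r i)
      = (T.card : ZMod l) * 1 + ((univ.filter (fun i => ¬ r (i + 1) = r i + 1)).card : ZMod l) * (-1) := by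
    rw [← Finset.sum_filter_add_sum_filter_not univ (fun i => r (i + 1) = r i + 1)]
    congr 1
    · rw [Finset.sum_congr rfl (fun i hi => show r (i+1) - r i = 1 from ?_)]
      · simp [Finset.sum_const, nsmul_eq_mul, hT]
      · rw [(Finset.mem_filter.1 hi).2]; ring
    · rw [Finset.sum_congr rfl (fun i hi => show r (i+1) - r i = -1 from ?_)]
      · simp [Finset.sum_const, nsmul_eq_mul]
      · have hi' := (Finset.mem_filter.1 hi).2
        rcases h i with h1 | h2
        · exact absurd h1 hi'
        · rw [h2]; ring
  have hcard : T.card + (univ.filter (fun i => ¬ r (i + 1) = r i + 1)).card = l := by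
    rw [Finset.card_filter_add_card_filter_not]
    simp
  have hzero : ((2 * T.card : ℕ) : ZMod l) = 0 := by
    have h1 : ((T.card : ℕ) : ZMod l) = ((univ.filter (fun i => ¬ r (i + 1) = r i + 1)).card : ZMod l) := by
      have := htel.symm.trans hsplit
      linear_combination -this
    have h2 : ((T.card + (univ.filter (fun i => ¬ r (i + 1) = r i + 1)).card : ℕ) : ZMod l) = 0 := by
      rw [hcard, ZMod.natCast_self]
    push_cast at h2 ⊢
    linear_combination h2 + h1
  have hdvd : l ∣ 2 * T.card := (ZMod.natCast_eq_zero_iff _ _).1 hzero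
  have hcop : Nat.Coprime l 2 := by
    rcases hodd with ⟨j, hj⟩
    subst hj
    exact Nat.coprime_two_right.2 ⟨j, rfl⟩
  have hdvd' : l ∣ T.card := (Nat.Coprime.dvd_of_dvd_mul_left hcop hdvd)
  have hle : T.card ≤ l := le_trans (Finset.card_le_univ T) (by simp)
  rcases Nat.eq_zero_or_pos T.card with h0 | hpos
  · right
    intro i
    have : i ∉ T := by
      rw [Finset.card_eq_zero.1 h0]; exact Finset.notMem_empty i
    rcases h i with h1 | h2
    · exact absurd (Finset.mem_filter.2 ⟨Finset.mem_univ i, h1⟩) this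
    · exact h2
  · left
    have : T.card = l := Nat.le_antisymm hle (Nat.le_of_dvd hpos hdvd')
    have hTuniv : T = univ := Finset.eq_univ_of_card T (by simpa using this)
    intro i
    have : i ∈ T := hTuniv ▸ Finset.mem_univ i
    exact (Finset.mem_filter.1 this).2


lemma good_count (l : ℕ) [NeZero l] (hl3 : 3 ≤ l) (hodd : Odd l) :
    ((univ : Finset (Fin l → ZMod l)).filter (fun r =>
      ∀ i : Fin l, r (i + 1) = r i + 1 ∨ r (i + 1) = r i - 1)).card = 2 * l := by
  have h2 : (2 : ZMod l) ≠ 0 := by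
    intro h
    have hd : (l : ℕ) ∣ 2 := (ZMod.natCast_eq_zero_iff 2 l).1 (by exact_mod_cast h)
    have := Nat.le_of_dvd (by norm_num) hd
    omega
  have hval1 : ((1 : Fin l)).val = 1 := by
    simp [Fin.val_one', Nat.mod_eq_of_lt (by omega : 1 < l)]
  have hval0 : ((0 : Fin l)).val = 0 := rfl
  have hvaladd : ∀ i : Fin l, (((i + 1 : Fin l)).val : ZMod l) = (i.val : ZMod l) + 1 := by
    intro i
    rw [Fin.val_add, hval1, ZMod.natCast_mod]
    push_cast
    ring
  set Φ : ZMod l × Bool → (Fin l → ZMod l) :=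
    fun p => fun i => p.1 + (i.val : ZMod l) * (cond p.2 1 (-1)) with hΦ
  have key : ((univ : Finset (ZMod l × Bool))).card =
      ((univ : Finset (Fin l → ZMod l)).filter (fun r =>
        ∀ i : Fin l, r (i + 1) = r i + 1 ∨ r (i + 1) = r i - 1)).card := by
    apply Finset.card_nbij Φ
    · rintro ⟨c, b⟩ _
      rw [Finset.mem_coe, Finset.mem_filter]
      refine ⟨Finset.mem_univ _, fun i => ?_⟩
      cases b
      · right
        show c + ((i+1).val : ZMod l) * _ = c + (i.val : ZMod l) * _ - 1
        rw [hvaladd]; simp; ring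
      · left
        show c + ((i+1).val : ZMod l) * _ = c + (i.val : ZMod l) * _ + 1
        rw [hvaladd]; simp; ring
    · rintro ⟨c, b⟩ _ ⟨c', b'⟩ _ hpq
      have h0 := congrFun hpq 0
      simp only [hΦ, hval0, Nat.cast_zero, zero_mul, add_zero] at h0
      subst h0
      have h1 := congrFun hpq 1
      simp only [hΦ, hval1, Nat.cast_one, one_mul] at h1
      have h1' : (cond b 1 (-1) : ZMod l) = cond b' 1 (-1) := by
        exact add_left_cancel h1
      have hb : b = b' := by
        cases b <;> cases b' <;> simp only [cond_true, cond_false] at h1' <;>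
          first
            | rfl
            | (exfalso; exact h2 (by linear_combination -h1'))
            | (exfalso; exact h2 (by linear_combination h1'))
      rw [hb]
    · intro r hr
      rw [Finset.coe_filter] at hr
      obtain ⟨-, hgood⟩ := hr
      rcases good_cases l hl3 hodd r hgood with hp | hm
      · refine ⟨(r 0, true), by simp, ?_⟩
        funext i
        show r 0 + (i.val : ZMod l) * _ = r i
        rw [lin_of_steps l hl3 r 1 hp i]
        simp
      · refine ⟨(r 0, false), by simp, ?_⟩
        funext i
        show r 0 + (i.val : ZMod l) * _ = r i
        rw [lin_of_steps l hl3 r (-1) (fun i => by rw [hm i]; ring) i]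
        simp
  rw [← key]
  simp [Fintype.card_prod, mul_comm]


def cycEdge (l : ℕ) [NeZero l] (i : Fin l) : Fin l × Fin l :=
  if h : i.val + 1 < l then (i, ⟨i.val + 1, h⟩)
  else (⟨0, Nat.pos_of_ne_zero (NeZero.ne l)⟩, i)

lemma prod_edges (l : ℕ) [NeZero l] (hl : 3 ≤ l) (g : Fin l → Fin l → ℝ)
    (hg : ∀ i j, g i j = g j i) :
    ∏ p ∈ edgeFinset' (cyc l), g p.1 p.2 = ∏ i : Fin l, g i (i + 1) := by
  have hval1 : ((1 : Fin l)).val = 1 := by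
    simp [Fin.val_one', Nat.mod_eq_of_lt (by omega : 1 < l)]
  have hvaladd : ∀ i : Fin l, ((i + 1 : Fin l)).val = (i.val + 1) % l := by
    intro i; rw [Fin.val_add, hval1]
  symm
  apply Finset.prod_nbij (cycEdge l)
  · intro i _
    rw [edgeFinset', Finset.mem_filter]
    refine ⟨Finset.mem_univ _, ?_⟩
    unfold cycEdge
    split
    · rename_i h
      refine ⟨by simp [Fin.lt_def], show _ ∧ _ from ⟨?_, Or.inl ?_⟩⟩
      · intro hc; exact absurd (congrArg Fin.val hc) (by simp)
      · simp [Nat.mod_eq_of_lt h]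
    · rename_i h
      have hi : i.val = l - 1 := by have := i.isLt; omega
      refine ⟨by simp [Fin.lt_def, hi]; omega, show _ ∧ _ from ⟨?_, Or.inr ?_⟩⟩
      · intro hc
        have := congrArg Fin.val hc
        simp [hi] at this
        omega
      · show (i.val + 1) % l = 0
        rw [hi, (by omega : l - 1 + 1 = l), Nat.mod_self]
  · intro i _ j _ hij
    unfold cycEdge at hij
    split at hij <;> split at hij
    · exact (Prod.ext_iff.1 hij).1
    · exfalso
      rename_i h1 h2
      have e1 := congrArg (fun p => p.1.val) hij
      have e2 := congrArg (fun p => p.2.val) hij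
      dsimp only at e1 e2
      have := j.isLt
      omega
    · exfalso
      rename_i h1 h2
      have e1 := congrArg (fun p => p.1.val) hij
      have e2 := congrArg (fun p => p.2.val) hij
      simp at e1 e2
      have := i.isLt
      omega
    · exact Fin.ext (by simpa using congrArg (fun p => p.2.val) hij)
  · intro p hp
    rw [edgeFinset', Finset.coe_filter] at hp
    obtain ⟨-, hlt, -, hadj⟩ := (hp : _ ∧ _ < _ ∧ _ ≠ _ ∧ _)
    rcases hadj with h1 | h2
    · refine ⟨p.1, Finset.mem_univ _, ?_⟩
      have hp1 : p.1.val + 1 < l := by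
        rcases Nat.lt_or_ge (p.1.val + 1) l with h | h
        · exact h
        · exfalso
          have : p.1.val + 1 = l := by have := p.1.isLt; omega
          rw [this, Nat.mod_self] at h1
          have := hlt
          rw [Fin.lt_def, ← h1] at this
          omega
      rw [cycEdge, dif_pos hp1]
      rw [Nat.mod_eq_of_lt hp1] at h1
      exact Prod.ext rfl (Fin.ext h1)
    · refine ⟨p.2, Finset.mem_univ _, ?_⟩
      have hp2 : ¬ (p.2.val + 1 < l) := by
        intro h
        rw [Nat.mod_eq_of_lt h] at h2
        rw [Fin.lt_def] at hlt
        omega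
      rw [cycEdge, dif_neg hp2]
      have : p.2.val + 1 = l := by have := p.2.isLt; omega
      rw [this, Nat.mod_self] at h2
      exact Prod.ext (Fin.ext h2) rfl
  · intro i _
    unfold cycEdge
    split
    · rename_i h
      congr 1
      apply Fin.ext
      rw [hvaladd, Nat.mod_eq_of_lt h]
    · rename_i h
      have hi : i.val = l - 1 := by have := i.isLt; omega
      rw [hg]
      congr 1
      apply Fin.ext
      rw [hvaladd, hi, (by omega : l - 1 + 1 = l), Nat.mod_self]


def aval (l : ℕ) (p q : ZMod l) : ℝ := if q = p + 1 ∨ q = p - 1 then 1 else 0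

def bval (s t : Bool) : ℝ := if s = t then 1 else -1

def epsb (s : Bool) : ℝ := cond s 1 (-1)

lemma bval_eq (s t : Bool) : bval s t = epsb s * epsb t := by
  cases s <;> cases t <;> simp [bval, epsb]

lemma epsb_sq (s : Bool) : epsb s * epsb s = 1 := by cases s <;> simp [epsb]

def zEquiv (l : ℕ) [NeZero l] : Fin (2 * l) ≃ ZMod l × Bool where
  toFun x := ((x.val : ZMod l), decide (x.val < l))
  invFun p := ⟨p.1.val + cond p.2 0 l, by
    have := ZMod.val_lt p.1
    cases p.2 <;> simp <;> omega⟩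
  left_inv x := by
    have hx := x.isLt
    by_cases h : x.val < l
    · apply Fin.ext
      simp [h, ZMod.val_natCast, Nat.mod_eq_of_lt h]
    · apply Fin.ext
      have hmod : x.val % l = x.val - l := by
        rw [Nat.mod_eq_sub_mod (le_of_not_gt h)]
        exact Nat.mod_eq_of_lt (by omega)
      simp [h, ZMod.val_natCast, hmod]
      omega
  right_inv p := by
    rcases p with ⟨r, b⟩
    have hr := ZMod.val_lt (n := l) r
    cases b
    · apply Prod.ext
      · show ((r.val + l : ℕ) : ZMod l) = r
        push_cast
        simp [ZMod.natCast_self, ZMod.natCast_rightInverse r]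
      · simp
    · apply Prod.ext
      · show ((r.val + 0 : ℕ) : ZMod l) = r
        simp [ZMod.natCast_rightInverse r]
      · simp [hr]

lemma stepval_factor (l : ℕ) [NeZero l] (x y : Fin (2 * l)) :
    stepval l x y = aval l (x.val : ZMod l) (y.val : ZMod l) *
      bval (decide (x.val < l)) (decide (y.val < l)) := by
  have key : ∀ a b : ℕ, ((a % l + 1) % l = b % l) ↔ ((a : ZMod l) + 1 = (b : ZMod l)) := by
    intro a b
    rw [Nat.mod_add_mod]
    constructor
    · intro h
      have := (ZMod.natCast_eq_natCast_iff' (a + 1) b l).2 h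
      push_cast at this
      exact this
    · intro h
      have : ((a + 1 : ℕ) : ZMod l) = (b : ZMod l) := by push_cast; exact h
      have := (ZMod.natCast_eq_natCast_iff' (a + 1) b l).1 this
      exact this
  have hcond : ((x.val % l + 1) % l = y.val % l ∨ (y.val % l + 1) % l = x.val % l) ↔
      ((y.val : ZMod l) = (x.val : ZMod l) + 1 ∨ (y.val : ZMod l) = (x.val : ZMod l) - 1) := by
    rw [key, key]
    constructor
    · rintro (h | h)
      · exact Or.inl h.symm
      · exact Or.inr (eq_sub_iff_add_eq.2 h)
    · rintro (h | h)
      · exact Or.inl h.symm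
      · exact Or.inr (eq_sub_iff_add_eq.1 h)
  unfold stepval aval bval
  by_cases hc : (x.val % l + 1) % l = y.val % l ∨ (y.val % l + 1) % l = x.val % l
  · rw [if_pos hc, if_pos (hcond.1 hc)]
    by_cases hs : x.val < l ↔ y.val < l
    · rw [if_pos hs, if_pos (decide_eq_decide.2 hs)]
      norm_num
    · rw [if_neg hs, if_neg (fun h => hs (decide_eq_decide.1 h))]
      norm_num
  · rw [if_neg hc, if_neg (fun h => hc (hcond.2 h)), zero_mul]

lemma prod_ite_one_zero {ι : Type*} (s : Finset ι) (P : ι → Prop) [DecidablePred P] :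
    (∏ i ∈ s, if P i then (1:ℝ) else 0) = if ∀ i ∈ s, P i then 1 else 0 := by
  by_cases h : ∀ i ∈ s, P i
  · rw [if_pos h]
    exact Finset.prod_eq_one fun i hi => if_pos (h i hi)
  · rw [if_neg h]
    push_neg at h
    obtain ⟨i, hi, hPi⟩ := h
    exact Finset.prod_eq_zero hi (if_neg hPi)

lemma bprod (l : ℕ) [NeZero l] (s : Fin l → Bool) :
    ∏ i : Fin l, bval (s i) (s (i + 1)) = 1 := by
  calc ∏ i : Fin l, bval (s i) (s (i + 1))
      = ∏ i : Fin l, epsb (s i) * epsb (s (i + 1)) := by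
        exact Finset.prod_congr rfl fun i _ => bval_eq _ _
    _ = (∏ i : Fin l, epsb (s i)) * ∏ i : Fin l, epsb (s (i + 1)) := Finset.prod_mul_distrib
    _ = (∏ i : Fin l, epsb (s i)) * ∏ i : Fin l, epsb (s i) := by
        congr 1
        exact Fintype.prod_equiv (Equiv.addRight (1 : Fin l)) _ _ (fun x => rfl)
    _ = ∏ i : Fin l, (epsb (s i) * epsb (s i)) := Finset.prod_mul_distrib.symm
    _ = 1 := Finset.prod_eq_one fun i _ => epsb_sq _

lemma sum_c (l : ℕ) [NeZero l] (hl3 : 3 ≤ l) (hodd : Odd l) :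
    ∑ σ : Fin l → Fin (2 * l), ∏ i : Fin l, stepval l (σ i) (σ (i + 1))
      = (2 : ℝ) ^ l * (2 * l) := by
  classical
  set E := zEquiv l with hE
  set Ψ : ((Fin l → ZMod l) × (Fin l → Bool)) ≃ (Fin l → Fin (2 * l)) :=
    { toFun := fun p i => E.symm (p.1 i, p.2 i)
      invFun := fun σ => (fun i => (E (σ i)).1, fun i => (E (σ i)).2)
      left_inv := fun p => by
        ext i <;> simp
      right_inv := fun σ => by
        funext i; simp } with hΨ
  have hfst : ∀ p : ZMod l × Bool, ((E.symm p).val : ZMod l) = p.1 := by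
    intro p
    have := E.apply_symm_apply p
    exact congrArg Prod.fst this
  have hsnd : ∀ p : ZMod l × Bool, decide ((E.symm p).val < l) = p.2 := by
    intro p
    have := E.apply_symm_apply p
    exact congrArg Prod.snd this
  rw [← Fintype.sum_equiv Ψ
    (fun p => (∏ i : Fin l, aval l (p.1 i) (p.1 (i + 1))) *
      (∏ i : Fin l, bval (p.2 i) (p.2 (i + 1))))
    (fun σ => ∏ i : Fin l, stepval l (σ i) (σ (i + 1)))
    (fun p => by
      show (∏ i : Fin l, aval l (p.1 i) (p.1 (i + 1))) * (∏ i : Fin l, bval (p.2 i) (p.2 (i + 1)))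
          = ∏ i : Fin l, stepval l (E.symm (p.1 i, p.2 i)) (E.symm (p.1 (i+1), p.2 (i+1)))
      rw [← Finset.prod_mul_distrib]
      refine Finset.prod_congr rfl fun i _ => ?_
      rw [stepval_factor, hfst, hfst, hsnd, hsnd])]
  rw [Fintype.sum_prod_type]
  have hin : ∀ r : Fin l → ZMod l, ∑ s : Fin l → Bool,
      (∏ i : Fin l, aval l (r i) (r (i + 1))) * (∏ i : Fin l, bval (s i) (s (i + 1)))
      = (2:ℝ)^l * ∏ i : Fin l, aval l (r i) (r (i + 1)) := by
    intro r
    rw [Finset.sum_congr rfl (fun s _ => by rw [bprod l s, mul_one])]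
    rw [Finset.sum_const, card_univ]
    simp [nsmul_eq_mul, mul_comm]
  rw [Finset.sum_congr rfl (fun r _ => hin r), ← Finset.mul_sum]
  congr 1
  have haprod : ∀ r : Fin l → ZMod l, (∏ i : Fin l, aval l (r i) (r (i + 1)))
      = if ∀ i : Fin l, r (i + 1) = r i + 1 ∨ r (i + 1) = r i - 1 then (1:ℝ) else 0 := by
    intro r
    unfold aval
    rw [prod_ite_one_zero univ (fun i => r (i + 1) = r i + 1 ∨ r (i + 1) = r i - 1)]
    simp
  rw [Finset.sum_congr rfl (fun r _ => haprod r), Finset.sum_boole,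
    good_count l hl3 hodd]
  push_cast
  ring

end AuxLemmas

/-- the cycle density of the `±1` kernel built from a partition of
`[0,1]` into `2ℓ` parts of measure `1/(2ℓ)` equals `2/ℓ^{ℓ-1}` for odd `ℓ`.
Parts are indexed by `Fin (2ℓ)` (0-indexed, so `⌈i/ℓ⌉` becomes `i < ℓ`), and
`i ≡ j ± 1 (mod ℓ)` reads `(i%ℓ+1)%ℓ = j%ℓ ∨ (j%ℓ+1)%ℓ = i%ℓ`. -/
theorem cycle_density_of_kernel (l : ℕ) (hl3 : 3 ≤ l) (hodd : Odd l)
    (A : Fin (2 * l) → Set ℝ) (hmeas : ∀ i, MeasurableSet (A i))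
    (hdisj : Pairwise (Function.onFun Disjoint A))
    (hcover : (⋃ i, A i) = Set.Icc (0:ℝ) 1)
    (hsize : ∀ i, volume (A i) = ENNReal.ofReal (1 / (2 * l)))
    (U : ℝ → ℝ → ℝ)
    (hU : ∀ i j : Fin (2 * l), ∀ x ∈ A i, ∀ y ∈ A j,
      U x y =
        if (i.val % l + 1) % l = j.val % l ∨ (j.val % l + 1) % l = i.val % l then
          (if (i.val < l ↔ j.val < l) then (1:ℝ) else -1)
        else 0) :
    homDensity (cyc l) U = 2 / (l : ℝ) ^ (l - 1) := by
  classical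
  haveI : NeZero l := ⟨by omega⟩
  set π : Measure (Fin l → ℝ) := Measure.pi fun _ => muI with hπ
  have hAsub : ∀ i, A i ⊆ Set.Icc (0:ℝ) 1 := fun i => hcover ▸ Set.subset_iUnion A i
  have hmuA : ∀ i, muI (A i) = ENNReal.ofReal (1 / (2 * l)) := by
    intro i
    rw [Measure.restrict_apply' measurableSet_Icc,
      Set.inter_eq_self_of_subset_left (hAsub i), hsize i]
  set c : (Fin l → Fin (2 * l)) → ℝ :=
    fun σ => ∏ p ∈ edgeFinset' (cyc l), stepval l (σ p.1) (σ p.2) with hc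
  set Box : (Fin l → Fin (2 * l)) → Set (Fin l → ℝ) :=
    fun σ => Set.univ.pi fun v => A (σ v) with hBox
  have hBoxMeas : ∀ σ, MeasurableSet (Box σ) :=
    fun σ => MeasurableSet.univ_pi fun v => hmeas (σ v)
  have hπBox : ∀ σ, π (Box σ) = ENNReal.ofReal ((1 / (2 * l)) ^ l) := by
    intro σ
    rw [hπ, hBox, Measure.pi_pi]
    simp only [hmuA]
    rw [Finset.prod_const, Finset.card_univ, Fintype.card_fin,
      ← ENNReal.ofReal_pow (by positivity)]
  have hae : ∀ᵐ x ∂π, ∀ v, x v ∈ Set.Icc (0:ℝ) 1 := by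
    rw [MeasureTheory.ae_all_iff]
    intro v
    rw [MeasureTheory.ae_iff]
    have hset : {x : Fin l → ℝ | ¬ x v ∈ Set.Icc (0:ℝ) 1}
        = Function.eval v ⁻¹' (Set.Icc (0:ℝ) 1)ᶜ := rfl
    rw [hset]
    apply Measure.pi_eval_preimage_null
    rw [Measure.restrict_apply' measurableSet_Icc, Set.compl_inter_self]
    simp
  have hpt : ∀ x : Fin l → ℝ, (∀ v, x v ∈ Set.Icc (0:ℝ) 1) →
      ∏ p ∈ edgeFinset' (cyc l), U (x p.1) (x p.2)
        = ∑ σ : Fin l → Fin (2 * l), c σ * (Box σ).indicator 1 x := by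
    intro x hx
    have hx' : ∀ v, x v ∈ ⋃ i, A i := fun v => by rw [hcover]; exact hx v
    choose σ₀ hσ₀ using fun v => Set.mem_iUnion.1 (hx' v)
    rw [Finset.sum_eq_single σ₀]
    · rw [Set.indicator_of_mem (Set.mem_univ_pi.2 fun v => hσ₀ v), Pi.one_apply, mul_one]
      exact Finset.prod_congr rfl fun p _ => hU (σ₀ p.1) (σ₀ p.2) _ (hσ₀ p.1) _ (hσ₀ p.2)
    · intro σ _ hne
      obtain ⟨v, hv⟩ := Function.ne_iff.1 hne
      have hnot : x ∉ Box σ := by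
        intro hmem
        exact Set.disjoint_left.1 (hdisj hv) (Set.mem_univ_pi.1 hmem v) (hσ₀ v)
      rw [Set.indicator_of_notMem hnot, mul_zero]
    · intro h
      exact absurd (Finset.mem_univ σ₀) h
  have hInt : ∀ σ : Fin l → Fin (2 * l),
      Integrable (fun x => c σ * (Box σ).indicator 1 x) π := by
    intro σ
    apply Integrable.const_mul
    rw [integrable_indicator_iff (hBoxMeas σ)]
    refine integrableOn_const ?_
    rw [hπBox σ]
    exact ENNReal.ofReal_ne_top
  have step1 : homDensity (cyc l) U
      = ∑ σ : Fin l → Fin (2 * l), c σ * ((1 : ℝ) / (2 * l)) ^ l := by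
    rw [homDensity]
    rw [integral_congr_ae (Filter.EventuallyEq.symm ?_)]
    rotate_left
    · exact fun x => ∑ σ : Fin l → Fin (2 * l), c σ * (Box σ).indicator 1 x
    · filter_upwards [hae] with x hx
      exact (hpt x hx).symm
    rw [integral_finset_sum _ (fun σ _ => hInt σ)]
    refine Finset.sum_congr rfl fun σ _ => ?_
    rw [MeasureTheory.integral_const_mul]
    congr 1
    have : (fun x => (Box σ).indicator (1 : (Fin l → ℝ) → ℝ) x)
        = (Box σ).indicator (fun _ => (1:ℝ)) := rfl
    rw [this, integral_indicator_const (1:ℝ) (hBoxMeas σ), measureReal_def, hπBox σ,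
      ENNReal.toReal_ofReal (by positivity)]
    simp
  have hcval : ∀ σ : Fin l → Fin (2 * l),
      c σ = ∏ i : Fin l, stepval l (σ i) (σ (i + 1)) :=
    fun σ => prod_edges l hl3 (fun i j => stepval l (σ i) (σ j))
      (fun i j => stepval_symm l (σ i) (σ j))
  rw [step1, ← Finset.sum_mul]
  rw [Finset.sum_congr rfl (fun σ _ => hcval σ), sum_c l hl3 hodd]
  have hl0 : (0:ℝ) < l := by positivity
  have h2l : ((2:ℝ) * l) ≠ 0 := by positivity
  have hll : (l:ℝ) ^ l = (l:ℝ) ^ (l - 1) * l := by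
    rw [← pow_succ]
    congr 1
    omega
  rw [div_pow, one_pow, mul_pow]
  rw [hll]
  field_simp
end
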